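/- If √M · ‖Θ‖_F < 1, where M = max_{1≤j≤d} cos²(Δ_emb, Θ^j), then the representation gap is strictly smaller than the embedding gap: ‖Θ^T Δ_emb‖₂ < ‖Δ_emb‖₂ (assuming Δ_emb ≠ 0 and all columns of Θ nonzero). -/
import Mathlib


open Finset

/-- cosine of the angle between two vectors in `Fin d → ℝ`. -/
noncomputable def cosAngle {d : ℕ} (v w : Fin d → ℝ) : ℝ :=
  (∑ k, v k * w k) / (Real.sqrt (∑ k, v k ^ 2) * Real.sqrt (∑ k, w k ^ 2))

theorem stmt_8 {d : ℕ} (hne : (Finset.univ : Finset (Fin d)).Nonempty)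
    (Θ : Matrix (Fin d) (Fin d) ℝ) (Δemb : Fin d → ℝ)
    (hΔ0 : Δemb ≠ 0) (hcol : ∀ j, (fun k => Θ k j) ≠ 0)
    (hM : Real.sqrt (Finset.univ.sup' hne (fun j => cosAngle Δemb (fun k => Θ k j) ^ 2)) *
        Real.sqrt (∑ i, ∑ k, Θ i k ^ 2) < 1) :
    Real.sqrt (∑ k, Matrix.vecMul Δemb Θ k ^ 2) < Real.sqrt (∑ k, Δemb k ^ 2) := by
  set A : ℝ := ∑ k, Δemb k ^ 2 with hA
  set M : ℝ := Finset.univ.sup' hne (fun j => cosAngle Δemb (fun k => Θ k j) ^ 2) with hMdef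
  set F : ℝ := ∑ i, ∑ k, Θ i k ^ 2 with hF
  have hApos : 0 < A := by
    obtain ⟨k, hk⟩ := Function.ne_iff.mp hΔ0
    exact Finset.sum_pos' (fun i _ => sq_nonneg _)
      ⟨k, Finset.mem_univ k, by simpa using sq_abs (Δemb k) ▸ pow_pos (abs_pos.mpr hk) 2⟩
  have hB : ∀ j, (0:ℝ) < ∑ k, Θ k j ^ 2 := by
    intro j
    obtain ⟨k, hk⟩ := Function.ne_iff.mp (hcol j)
    exact Finset.sum_pos' (fun i _ => sq_nonneg _)
      ⟨k, Finset.mem_univ k, by simpa using sq_abs (Θ k j) ▸ pow_pos (abs_pos.mpr hk) 2⟩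
  have hMnonneg : 0 ≤ M := by
    obtain ⟨j, hj⟩ := hne
    rw [hMdef]
    exact le_trans (sq_nonneg _)
      (Finset.le_sup' (fun j => cosAngle Δemb (fun k => Θ k j) ^ 2) hj)
  -- key identity: inner product squared = cos² * (A * B j)
  have hkey : ∀ j, (∑ k, Δemb k * Θ k j) ^ 2
      = cosAngle Δemb (fun k => Θ k j) ^ 2 * (A * ∑ k, Θ k j ^ 2) := by
    intro j
    have hAB : (Real.sqrt A * Real.sqrt (∑ k, Θ k j ^ 2)) ^ 2 = A * ∑ k, Θ k j ^ 2 := by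
      rw [mul_pow, Real.sq_sqrt hApos.le, Real.sq_sqrt (hB j).le]
    have hABne : A * (∑ k, Θ k j ^ 2) ≠ 0 := ne_of_gt (mul_pos hApos (hB j))
    rw [cosAngle, div_pow, hAB, div_mul_cancel₀ _ hABne]
  have hsum : ∑ k, Matrix.vecMul Δemb Θ k ^ 2 ≤ M * (A * F) := by
    have : ∀ j ∈ (Finset.univ : Finset (Fin d)),
        Matrix.vecMul Δemb Θ j ^ 2 ≤ M * (A * ∑ k, Θ k j ^ 2) := by
      intro j _
      have h1 : Matrix.vecMul Δemb Θ j = ∑ k, Δemb k * Θ k j := by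
        simp [Matrix.vecMul, dotProduct]
      rw [h1, hkey j, hMdef]
      exact mul_le_mul_of_nonneg_right (Finset.le_sup' (fun j => cosAngle Δemb (fun k => Θ k j) ^ 2) (Finset.mem_univ j))
        (le_of_lt (mul_pos hApos (hB j)))
    calc ∑ k, Matrix.vecMul Δemb Θ k ^ 2 ≤ ∑ j, M * (A * ∑ k, Θ k j ^ 2) :=
          Finset.sum_le_sum this
      _ = M * (A * F) := by
          rw [← Finset.mul_sum, ← Finset.mul_sum, hF, Finset.sum_comm]
  have hFnonneg : 0 ≤ F := Finset.sum_nonneg fun i _ => Finset.sum_nonneg fun k _ => sq_nonneg _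
  calc Real.sqrt (∑ k, Matrix.vecMul Δemb Θ k ^ 2)
      ≤ Real.sqrt (M * (A * F)) := Real.sqrt_le_sqrt hsum
    _ = Real.sqrt M * Real.sqrt F * Real.sqrt A := by
        rw [Real.sqrt_mul hMnonneg, Real.sqrt_mul hApos.le]; ring
    _ < 1 * Real.sqrt A :=
        mul_lt_mul_of_pos_right hM (Real.sqrt_pos.mpr hApos)
    _ = Real.sqrt A := one_mul _
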